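/- Let G be an Eulerian graph containing a degree-2 vertex v with non-adjacent neighbours x1 and x2. If G − v + x1x2 has a legal colouring using at most ⌊(|V(G)|−1)/2⌋ colours, then G has a cycle decomposition into at most ⌊(|V(G)|−1)/2⌋ cycles. -/

import Mathlib

open SimpleGraph

def IsCycleEdgeSet {V : Type*} (G : SimpleGraph V) (s : Set (Sym2 V)) : Prop :=
  ∃ (v : V) (w : G.Walk v v), w.IsCycle ∧ s = {e | e ∈ w.edges}

def HasCycleDecompLE {V : Type*} (G : SimpleGraph V) (m : ℕ) : Prop :=
  ∃ (n : ℕ) (f : Fin n → Set (Sym2 V)), n ≤ m ∧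
    (∀ i, IsCycleEdgeSet G (f i)) ∧
    (Pairwise fun i j => Disjoint (f i) (f j)) ∧
    (⋃ i, f i) = G.edgeSet

def IsLegalColouringWith {V : Type*} (G : SimpleGraph V) (c : Sym2 V → ℕ) (m : ℕ) : Prop :=
  (∀ e ∈ G.edgeSet, 1 ≤ c e ∧ c e ≤ m) ∧
  ∀ i : ℕ, ({e ∈ G.edgeSet | c e = i}).Nonempty → IsCycleEdgeSet G {e ∈ G.edgeSet | c e = i}

def IsLegalColouring {V : Type*} [Fintype V] (G : SimpleGraph V) (c : Sym2 V → ℕ) : Prop :=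
  IsLegalColouringWith G c ((Fintype.card V - 1) / 2)
open SimpleGraph

private lemma aux_isolated {V : Type*} {G' : SimpleGraph V} {v : V}
    (hv : ∀ w, ¬ G'.Adj v w) : ∀ {a b : V} (p : G'.Walk a b), v ∈ p.support → v = b := by
  intro a b p
  induction p with
  | nil => simp
  | cons h q ih =>
    intro hm
    rw [SimpleGraph.Walk.support_cons, List.mem_cons] at hm
    rcases hm with rfl | hm
    · exact absurd h (hv _)
    · exact ih hm

private lemma aux_first_edge {V : Type*} {G' : SimpleGraph V} {z y u : V}
    (p : G'.Walk z u) (hnd : p.support.Nodup) (he : s(z, y) ∈ p.edges) :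
    ∃ (h : G'.Adj z y) (r : G'.Walk y u), p = SimpleGraph.Walk.cons h r := by
  cases p with
  | nil => simp at he
  | @cons _ b _ h r =>
    rw [SimpleGraph.Walk.edges_cons, List.mem_cons] at he
    rcases he with he | he
    · have hb : y = b := by
        rcases Sym2.eq_iff.mp he with ⟨_, hb⟩ | ⟨hzb, _⟩
        · exact hb
        · exact absurd hzb h.ne
      subst hb
      exact ⟨h, r, rfl⟩
    · exfalso
      have hz := r.fst_mem_support_of_mem_edges he
      rw [SimpleGraph.Walk.support_cons, List.nodup_cons] at hnd
      exact hnd.1 hz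

private lemma aux_cycle_split {V : Type*} {G' : SimpleGraph V} {x1 x2 : V}
    (hx : x1 ≠ x2) (c : G'.Walk x1 x1) (hc : c.IsCycle) (he : s(x1, x2) ∈ c.edges) :
    ∃ r : G'.Walk x2 x1, r.IsPath ∧ s(x1, x2) ∉ r.edges ∧
      {e | e ∈ c.edges} = insert s(x1, x2) {e | e ∈ r.edges} := by
  cases c with
  | nil => simp at he
  | @cons _ b _ h q =>
    have hqnd : q.support.Nodup := by
      have h2 := hc.2
      rwa [SimpleGraph.Walk.support_cons, List.tail_cons] at h2
    have hednd := hc.1.1.edges_nodup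
    rw [SimpleGraph.Walk.edges_cons, List.nodup_cons] at hednd
    rw [SimpleGraph.Walk.edges_cons, List.mem_cons] at he
    by_cases hb : b = x2
    · subst hb
      refine ⟨q, SimpleGraph.Walk.IsPath.mk' hqnd, hednd.1, ?_⟩
      ext e
      simp [SimpleGraph.Walk.edges_cons]
    · have heq : s(x1, x2) ∈ q.edges := by
        rcases he with he | he
        · exfalso
          rcases Sym2.eq_iff.mp he with ⟨_, h2⟩ | ⟨_, h2⟩
          · exact hb h2.symm
          · exact hx h2.symm
        · exact he
      have hrev : s(x1, x2) ∈ q.reverse.edges := by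
        rw [SimpleGraph.Walk.edges_reverse]; exact List.mem_reverse.mpr heq
      have hrevnd : q.reverse.support.Nodup := by
        rw [SimpleGraph.Walk.support_reverse]; exact List.nodup_reverse.mpr hqnd
      obtain ⟨h2, r0, hr0⟩ := aux_first_edge q.reverse hrevnd hrev
      rw [hr0, SimpleGraph.Walk.support_cons, List.nodup_cons] at hrevnd
      refine ⟨r0.append (SimpleGraph.Walk.cons h.symm SimpleGraph.Walk.nil), ?_, ?_, ?_⟩
      · apply SimpleGraph.Walk.IsPath.mk'
        rw [SimpleGraph.Walk.support_append]
        simp only [SimpleGraph.Walk.support_cons, SimpleGraph.Walk.support_nil, List.tail_cons]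
        rw [List.nodup_append]
        refine ⟨hrevnd.2, List.nodup_singleton _, ?_⟩
        intro a ha b hb
        rw [List.mem_singleton] at hb
        subst hb
        rintro rfl
        exact hrevnd.1 ha
      · rw [SimpleGraph.Walk.edges_append]
        simp only [SimpleGraph.Walk.edges_cons, SimpleGraph.Walk.edges_nil, List.mem_append,
          List.mem_singleton, List.mem_nil_iff, or_false]
        rintro (hmem | hmem)
        · exact hrevnd.1 (r0.fst_mem_support_of_mem_edges hmem)
        · rcases Sym2.eq_iff.mp hmem with ⟨_, h1⟩ | ⟨_, h1⟩
          · exact hx h1.symm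
          · exact hb h1.symm
      · have hqe : ∀ e, e ∈ q.edges ↔ (e = s(x1, x2) ∨ e ∈ r0.edges) := by
          intro e
          rw [← List.mem_reverse, ← SimpleGraph.Walk.edges_reverse, hr0,
            SimpleGraph.Walk.edges_cons, List.mem_cons]
        ext e
        have hswap : s(b, x1) = s(x1, b) := Sym2.eq_swap
        simp only [Set.mem_setOf_eq, Set.mem_insert_iff, SimpleGraph.Walk.edges_cons,
          List.mem_cons, SimpleGraph.Walk.edges_append, List.mem_append,
          SimpleGraph.Walk.edges_nil, List.mem_singleton, List.mem_nil_iff, or_false,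
          hqe e, hswap]
        tauto

private lemma aux_build {V : Type*} {G G' : SimpleGraph V} {v x1 x2 : V}
    (hx : x1 ≠ x2) (hv1 : G.Adj v x1) (hv2 : G.Adj v x2)
    (r : G'.Walk x2 x1) (hr : r.IsPath) (hvr : v ∉ r.support)
    (hsub : ∀ e ∈ r.edges, e ∈ G.edgeSet) :
    ∃ w : G.Walk v v, w.IsCycle ∧
      {e | e ∈ w.edges} = {e | e ∈ r.edges} ∪ {s(v, x1), s(v, x2)} := by
  refine ⟨SimpleGraph.Walk.cons hv2 ((r.transfer G hsub).append
    (SimpleGraph.Walk.cons hv1.symm SimpleGraph.Walk.nil)), ?_, ?_⟩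
  · rw [SimpleGraph.Walk.cons_isCycle_iff]
    constructor
    · apply SimpleGraph.Walk.IsPath.mk'
      rw [SimpleGraph.Walk.support_append, SimpleGraph.Walk.support_transfer]
      simp only [SimpleGraph.Walk.support_cons, SimpleGraph.Walk.support_nil, List.tail_cons]
      rw [List.nodup_append]
      refine ⟨hr.2, List.nodup_singleton _, ?_⟩
      intro a ha b hb
      rw [List.mem_singleton] at hb
      subst hb
      rintro rfl
      exact hvr ha
    · rw [SimpleGraph.Walk.edges_append, SimpleGraph.Walk.edges_transfer]
      simp only [SimpleGraph.Walk.edges_cons, SimpleGraph.Walk.edges_nil, List.mem_append,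
        List.mem_singleton, List.mem_nil_iff, or_false]
      rintro (hmem | hmem)
      · exact hvr (r.fst_mem_support_of_mem_edges hmem)
      · rcases Sym2.eq_iff.mp hmem with ⟨h1, _⟩ | ⟨_, h1⟩
        · exact hv1.ne h1
        · exact hx h1.symm
  · ext e
    have hswap : s(x1, v) = s(v, x1) := Sym2.eq_swap
    simp only [Set.mem_setOf_eq, SimpleGraph.Walk.edges_cons, List.mem_cons,
      SimpleGraph.Walk.edges_append, SimpleGraph.Walk.edges_transfer, List.mem_append,
      SimpleGraph.Walk.edges_nil, List.mem_singleton, List.mem_nil_iff, or_false,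
      Set.mem_union, Set.mem_insert_iff, Set.mem_singleton_iff, hswap]
    tauto

theorem stmt_15 {V : Type*} [Fintype V] (G : SimpleGraph V) (v x1 x2 : V)
    (hEuler : ∀ w : V, Even ((G.neighborSet w).ncard))
    (hx : x1 ≠ x2) (hN : G.neighborSet v = {x1, x2}) (hnadj : ¬ G.Adj x1 x2)
    (hcol : ∃ c : Sym2 V → ℕ,
      IsLegalColouringWith
        (SimpleGraph.fromEdgeSet ((G.edgeSet \ {s(v, x1), s(v, x2)}) ∪ {s(x1, x2)})) c
        ((Fintype.card V - 1) / 2)) :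
    HasCycleDecompLE G ((Fintype.card V - 1) / 2) := by
  classical
  obtain ⟨c, hc1, hc2⟩ := hcol
  set m : ℕ := (Fintype.card V - 1) / 2 with hm
  set G' : SimpleGraph V :=
    SimpleGraph.fromEdgeSet ((G.edgeSet \ {s(v, x1), s(v, x2)}) ∪ {s(x1, x2)}) with hG'
  have hvx1 : G.Adj v x1 := by
    have h : x1 ∈ G.neighborSet v := by rw [hN]; exact Set.mem_insert _ _
    exact h
  have hvx2 : G.Adj v x2 := by
    have h : x2 ∈ G.neighborSet v := by rw [hN]; exact Set.mem_insert_iff.mpr (Or.inr rfl)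
    exact h
  have hvne1 : v ≠ x1 := hvx1.ne
  have hvne2 : v ≠ x2 := hvx2.ne
  have hEdge : G'.edgeSet = (G.edgeSet \ {s(v, x1), s(v, x2)}) ∪ {s(x1, x2)} := by
    rw [hG', SimpleGraph.edgeSet_fromEdgeSet]
    ext e
    simp only [Set.mem_diff, Set.mem_union, Set.mem_setOf_eq, Set.mem_singleton_iff]
    constructor
    · rintro ⟨h, _⟩; exact h
    · rintro h
      refine ⟨h, ?_⟩
      rcases h with ⟨hGe, _⟩ | rfl
      · exact G.not_isDiag_of_mem_edgeSet hGe
      · simpa using hx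
  have hisol : ∀ w, ¬ G'.Adj v w := by
    intro w hadj
    have hw : s(v, w) ∈ G'.edgeSet := hadj
    rw [hEdge] at hw
    rcases hw with ⟨hGe, hns⟩ | hs
    · have hwn : w ∈ G.neighborSet v := hGe
      rw [hN] at hwn
      rcases hwn with rfl | hwn
      · exact hns (Set.mem_insert _ _)
      · rw [Set.mem_singleton_iff] at hwn
        subst hwn
        exact hns (Set.mem_insert_iff.mpr (Or.inr rfl))
    · rw [Set.mem_singleton_iff] at hs
      rcases Sym2.eq_iff.mp hs with ⟨h1, _⟩ | ⟨h1, _⟩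
      · exact hvne1 h1
      · exact hvne2 h1
  have he12' : s(x1, x2) ∈ G'.edgeSet := by
    rw [hEdge]; exact Or.inr rfl
  have he12G : s(x1, x2) ∉ G.edgeSet := fun h => hnadj ((SimpleGraph.mem_edgeSet _).mp h)
  have hsv1 : s(v, x1) ∉ G'.edgeSet := fun h => hisol x1 ((SimpleGraph.mem_edgeSet _).mp h)
  have hsv2 : s(v, x2) ∉ G'.edgeSet := fun h => hisol x2 ((SimpleGraph.mem_edgeSet _).mp h)
  -- colour classes
  set Cl : ℕ → Set (Sym2 V) := fun j => {e ∈ G'.edgeSet | c e = j} with hCl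
  have hc2' : ∀ j, (Cl j).Nonempty → IsCycleEdgeSet G' (Cl j) := hc2
  have hClG' : ∀ {j : ℕ} {e : Sym2 V}, e ∈ Cl j → e ∈ G'.edgeSet := by
    intro j e he
    exact he.1
  have hClG : ∀ {e : Sym2 V} {j : ℕ}, e ∈ Cl j → e ≠ s(x1, x2) → e ∈ G.edgeSet := by
    intro e j hej hne
    have hG'e : e ∈ G'.edgeSet := hej.1
    rw [hEdge] at hG'e
    rcases hG'e with ⟨hGe, _⟩ | hs
    · exact hGe
    · exact absurd hs hne
  have hClD : ∀ {a b : ℕ}, a ≠ b → Disjoint (Cl a) (Cl b) := by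
    intro a b hab
    rw [Set.disjoint_left]
    intro e hea heb
    exact hab (hea.2.symm.trans heb.2)
  set T : Finset ℕ := (Finset.Icc 1 m).filter (fun j => (Cl j).Nonempty) with hT
  set g : Fin T.card → {x // x ∈ T} := fun i => T.equivFin.symm i with hg
  set f : Fin T.card → Set (Sym2 V) := fun i => if s(x1, x2) ∈ Cl (g i) then
      ((Cl (g i) \ {s(x1, x2)}) ∪ {s(v, x1), s(v, x2)}) else Cl (g i) with hf
  refine ⟨T.card, f, ?_, ?_, ?_, ?_⟩
  · calc T.card ≤ (Finset.Icc 1 m).card := Finset.card_filter_le _ _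
      _ = m := by rw [Nat.card_Icc]; omega
  · -- each is a cycle edge set of G
    intro i
    obtain ⟨hjI, hjne⟩ := Finset.mem_filter.mp (g i).2
    obtain ⟨a, w, hw, hset⟩ := hc2' _ hjne
    simp only [hf]
    by_cases h12 : s(x1, x2) ∈ Cl (g i)
    · rw [if_pos h12]
      have hew : s(x1, x2) ∈ w.edges := by
        have h := h12; rw [hset] at h; exact h
      have hx1w : x1 ∈ w.support := w.fst_mem_support_of_mem_edges hew
      have hc' : (w.rotate x1 hx1w).IsCycle := hw.rotate _
      have hce : ∀ e, e ∈ (w.rotate x1 hx1w).edges ↔ e ∈ w.edges :=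
        fun e => (w.rotate_edges x1 hx1w).mem_iff
      obtain ⟨r, hrp, hrne, hreq⟩ := aux_cycle_split hx (w.rotate x1 hx1w) hc' ((hce _).mpr hew)
      have hsetr : Cl (g i) = insert s(x1, x2) {e | e ∈ r.edges} := by
        rw [hset, ← hreq]
        ext e
        exact (hce e).symm
      have hsub : ∀ e ∈ r.edges, e ∈ G.edgeSet := by
        intro e hee
        have hne12 : e ≠ s(x1, x2) := fun h => hrne (h ▸ hee)
        have heC : e ∈ Cl (g i) := by
          rw [hsetr]; exact Set.mem_insert_iff.mpr (Or.inr hee)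
        exact hClG heC hne12
      have hvr : v ∉ r.support := fun hmem => hvne1 (aux_isolated hisol r hmem)
      obtain ⟨w', hw', hw'e⟩ := aux_build hx hvx1 hvx2 r hrp hvr hsub
      refine ⟨v, w', hw', ?_⟩
      have hrne' : s(x1, x2) ∉ {e : Sym2 V | e ∈ r.edges} := hrne
      rw [hw'e, hsetr, Set.insert_diff_self_of_notMem hrne']
    · rw [if_neg h12]
      have hsub : ∀ e ∈ w.edges, e ∈ G.edgeSet := by
        intro e hee
        have heC : e ∈ Cl (g i) := by rw [hset]; exact hee
        have hne12 : e ≠ s(x1, x2) := fun h => h12 (h ▸ heC)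
        exact hClG heC hne12
      refine ⟨a, w.transfer G hsub, hw.transfer hsub, ?_⟩
      rw [hset]
      ext e
      simp [SimpleGraph.Walk.edges_transfer]
  · -- pairwise disjoint
    intro i j hij
    have hgij : ((g i : ℕ)) ≠ ((g j : ℕ)) := by
      intro h
      exact hij (T.equivFin.symm.injective (Subtype.ext h))
    have hD := hClD hgij
    simp only [hf]
    by_cases hi12 : s(x1, x2) ∈ Cl (g i) <;> by_cases hj12 : s(x1, x2) ∈ Cl (g j)
    · exact absurd (hi12.2.symm.trans hj12.2) hgij
    · rw [if_pos hi12, if_neg hj12, Set.disjoint_left]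
      rintro e (⟨he1, _⟩ | he1) he2
      · exact Set.disjoint_left.mp hD he1 he2
      · rcases he1 with rfl | he1
        · exact hsv1 (hClG' he2)
        · rw [Set.mem_singleton_iff] at he1; subst he1; exact hsv2 (hClG' he2)
    · rw [if_neg hi12, if_pos hj12, Set.disjoint_left]
      rintro e he1 (⟨he2, _⟩ | he2)
      · exact Set.disjoint_left.mp hD he1 he2
      · rcases he2 with rfl | he2
        · exact hsv1 (hClG' he1)
        · rw [Set.mem_singleton_iff] at he2; subst he2; exact hsv2 (hClG' he1)
    · rw [if_neg hi12, if_neg hj12]; exact hD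
  · -- union is the edge set
    have hj0T : c s(x1, x2) ∈ T := by
      rw [hT, Finset.mem_filter, Finset.mem_Icc]
      exact ⟨(hc1 _ he12'), ⟨s(x1, x2), he12', rfl⟩⟩
    apply Set.Subset.antisymm
    · intro e he
      rw [Set.mem_iUnion] at he
      obtain ⟨i, hei⟩ := he
      simp only [hf] at hei
      by_cases h12 : s(x1, x2) ∈ Cl (g i)
      · rw [if_pos h12] at hei
        rcases hei with ⟨he1, hne⟩ | he1
        · exact hClG he1 hne
        · rcases he1 with rfl | he1
          · exact hvx1
          · rw [Set.mem_singleton_iff] at he1; subst he1; exact hvx2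
      · rw [if_neg h12] at hei
        exact hClG hei (fun h => h12 (h ▸ hei))
    · intro e heG
      rw [Set.mem_iUnion]
      by_cases hsv : e = s(v, x1) ∨ e = s(v, x2)
      · refine ⟨T.equivFin ⟨c s(x1, x2), hj0T⟩, ?_⟩
        have hgi : g (T.equivFin ⟨c s(x1, x2), hj0T⟩) = ⟨c s(x1, x2), hj0T⟩ :=
          T.equivFin.symm_apply_apply _
        simp only [hf]
        rw [hgi]
        have h12 : s(x1, x2) ∈ Cl (c s(x1, x2)) := ⟨he12', rfl⟩
        rw [if_pos h12]
        exact Or.inr hsv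
      · push_neg at hsv
        have heG' : e ∈ G'.edgeSet := by
          rw [hEdge]
          left
          refine ⟨heG, ?_⟩
          rintro (h | h)
          · exact hsv.1 h
          · rw [Set.mem_singleton_iff] at h; exact hsv.2 h
        have hne12 : e ≠ s(x1, x2) := fun h => he12G (h ▸ heG)
        have hjT : c e ∈ T := by
          rw [hT, Finset.mem_filter, Finset.mem_Icc]
          exact ⟨hc1 _ heG', ⟨e, heG', rfl⟩⟩
        refine ⟨T.equivFin ⟨c e, hjT⟩, ?_⟩
        have hgi : g (T.equivFin ⟨c e, hjT⟩) = ⟨c e, hjT⟩ := T.equivFin.symm_apply_apply _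
        simp only [hf]
        rw [hgi]
        have heC : e ∈ Cl (c e) := ⟨heG', rfl⟩
        by_cases h12 : s(x1, x2) ∈ Cl (c e)
        · rw [if_pos h12]
          exact Or.inl ⟨heC, hne12⟩
        · rw [if_neg h12]
          exact heC
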